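/- Let m, n, k be positive integers with k ≥ 2, and let a = (a_1,…,a_n) ∈ {0,1,…,m}^n. If H_1, …, H_N are affine hyperplanes in ℝ^n, none containing a, such that every point of {0,1,…,m}^n \ {a} is contained in at least k of them (with multiplicity), then N ≥ mn + (k−1)m. -/

import Mathlib

open Polynomial

namespace Stmt12Aux

/-- Expansion of a coefficient of `φ %ₘ M` as a linear combination of coefficients of `φ`. -/
theorem modByMonic_coeff_sum_expand {R : Type*} [CommRing R] (M : R[X]) (hM : M.Monic)
    (φ : R[X]) (NN e : ℕ) (hφ : φ.natDegree < NN + 1) :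
    (φ %ₘ M).coeff e = ∑ d ∈ Finset.range (NN + 1), φ.coeff d * ((X ^ d %ₘ M).coeff e) := by
  conv_lhs => rw [φ.as_sum_range' (NN + 1) hφ]
  rw [show ((∑ d ∈ Finset.range (NN + 1), (Polynomial.monomial d) (φ.coeff d)) %ₘ M)
      = ∑ d ∈ Finset.range (NN + 1), ((Polynomial.monomial d) (φ.coeff d)) %ₘ M from
    map_sum (Polynomial.modByMonicHom M) _ _]
  rw [Polynomial.finset_sum_coeff]
  refine Finset.sum_congr rfl fun d _ => ?_
  rw [← Polynomial.smul_X_eq_monomial, Polynomial.smul_modByMonic, Polynomial.coeff_smul,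
    smul_eq_mul]

/-- A coefficient of `X^d %ₘ M` vanishes when `d` is small. -/
theorem X_pow_modByMonic_coeff_eq_zero {R : Type*} [CommRing R] [Nontrivial R] (M : R[X])
    (hM : M.Monic) (d e : ℕ) (hd : d < e) (hdM : d < M.natDegree) :
    ((X ^ d : R[X]) %ₘ M).coeff e = 0 := by
  have hdeg : degree ((X : R[X]) ^ d) < degree M := by
    rw [Polynomial.degree_X_pow, Polynomial.degree_eq_natDegree hM.ne_zero]
    exact_mod_cast hdM
  rw [(Polynomial.modByMonic_eq_self_iff hM).2 hdeg, Polynomial.coeff_X_pow,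
    if_neg (by omega)]

/-- The key univariate computation: the `natDegree Q` coefficient of
`(Q * ψ) %ₘ (Q * (X - C t))` equals `ψ.eval t`. -/
theorem coeff_mul_modByMonic (Q : ℝ[X]) (hQ : Q.Monic) (t : ℝ) (ψ : ℝ[X]) :
    ((Q * ψ) %ₘ (Q * (X - C t))).coeff Q.natDegree = ψ.eval t := by
  obtain ⟨χ, hχ⟩ := Polynomial.X_sub_C_dvd_sub_C_eval (a := t) (p := ψ)
  have hmon : (Q * (X - C t)).Monic := hQ.mul (monic_X_sub_C t)
  have key : Q * ψ = (Q * (X - C t)) * χ + C (ψ.eval t) * Q := by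
    linear_combination Q * hχ
  rw [key, Polynomial.add_modByMonic,
    (Polynomial.modByMonic_eq_zero_iff_dvd hmon).2 ⟨χ, rfl⟩, zero_add]
  have hdeg : degree (C (ψ.eval t) * Q) < degree (Q * (X - C t)) := by
    have h1 : degree (C (ψ.eval t) * Q) ≤ degree Q := by
      calc degree (C (ψ.eval t) * Q) ≤ degree (C (ψ.eval t)) + degree Q :=
            Polynomial.degree_mul_le _ _
        _ ≤ 0 + degree Q := add_le_add_left (Polynomial.degree_C_le) _
        _ = degree Q := by rw [zero_add]
    have h2 : degree Q < degree (Q * (X - C t)) := by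
      rw [Polynomial.degree_eq_natDegree hQ.ne_zero, Polynomial.degree_eq_natDegree hmon.ne_zero,
        hQ.natDegree_mul (monic_X_sub_C t), Polynomial.natDegree_X_sub_C]
      exact_mod_cast lt_add_one _
    exact lt_of_le_of_lt h1 h2
  rw [(Polynomial.modByMonic_eq_self_iff hmon).2 hdeg, Polynomial.coeff_C_mul,
    hQ.coeff_natDegree, mul_one]

/-- Coprimality product: if `(X - s)^k` divides `φ` for each `s` in a finset, so does the
product. -/
theorem prodpow_dvd (T : Finset ℝ) (k : ℕ) (φ : ℝ[X])
    (h : ∀ s ∈ T, (X - C s) ^ k ∣ φ) : (∏ s ∈ T, (X - C s) ^ k) ∣ φ := by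
  refine Finset.prod_dvd_of_coprime ?_ h
  intro s hs t ht hst
  exact (Polynomial.isCoprime_X_sub_C_of_isUnit_sub
    ((sub_ne_zero_of_ne hst).isUnit)).pow

theorem monic_prodpow (T : Finset ℝ) (k : ℕ) : (∏ s ∈ T, (X - C s) ^ k).Monic :=
  monic_prod_of_monic _ _ fun s _ => (monic_X_sub_C s).pow _

theorem natDegree_prodpow (T : Finset ℝ) (k : ℕ) :
    (∏ s ∈ T, (X - C s) ^ k).natDegree = k * T.card := by
  rw [Polynomial.natDegree_prod _ _ (fun s _ => ((monic_X_sub_C s).pow _).ne_zero)]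
  simp [Polynomial.natDegree_pow, Polynomial.natDegree_X_sub_C, mul_comm]

/-- Punctured Combinatorial Nullstellensatz over grids `{0,…,m}^n`: a polynomial vanishing at
every grid point except one has total degree at least `m * n`. -/
theorem PCN (m : ℕ) : ∀ (n : ℕ) (f : MvPolynomial (Fin n) ℝ) (a : Fin n → ℝ),
    (∀ i, ∃ j : ℕ, j ≤ m ∧ a i = (j : ℝ)) →
    (∀ x : Fin n → ℝ, (∀ i, ∃ j : ℕ, j ≤ m ∧ x i = (j : ℝ)) → x ≠ a →
      MvPolynomial.eval x f = 0) →
    MvPolynomial.eval a f ≠ 0 → m * n ≤ f.totalDegree := by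
  intro n
  induction n with
  | zero => intro f a _ _ _; simp
  | succ n ih =>
    intro f a ha hvan hnz
    classical
    set a' : Fin n → ℝ := Fin.tail a with ha'
    obtain ⟨j0, hj0le, hj0⟩ := ha 0
    set Tfull : Finset ℝ := (Finset.range (m + 1)).image (Nat.cast : ℕ → ℝ) with hTfull
    have hTmem : ∀ s ∈ Tfull, ∃ j : ℕ, j ≤ m ∧ s = (j : ℝ) := by
      intro s hs
      simp only [hTfull, Finset.mem_image, Finset.mem_range] at hs
      obtain ⟨j, hj, rfl⟩ := hs
      exact ⟨j, by omega, rfl⟩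
    have ha0T : a 0 ∈ Tfull := by
      simp only [hTfull, Finset.mem_image, Finset.mem_range]
      exact ⟨j0, by omega, hj0.symm⟩
    set T' : Finset ℝ := Tfull.erase (a 0) with hT'
    have hT'card : T'.card = m := by
      rw [hT', Finset.card_erase_of_mem ha0T, hTfull,
        Finset.card_image_of_injective _ Nat.cast_injective, Finset.card_range]
      omega
    set Q : ℝ[X] := ∏ s ∈ T', (X - C s) ^ 1 with hQdef
    have hQmonic : Q.Monic := monic_prodpow T' 1
    have hQdeg : Q.natDegree = m := by rw [hQdef, natDegree_prodpow, hT'card, one_mul]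
    set M : ℝ[X] := Q * (X - C (a 0)) with hMdef
    have hMmonic : M.Monic := hQmonic.mul (monic_X_sub_C _)
    have hMdeg : M.natDegree = m + 1 := by
      rw [hMdef, hQmonic.natDegree_mul (monic_X_sub_C _), hQdeg, Polynomial.natDegree_X_sub_C]
    set p := MvPolynomial.finSuccEquiv ℝ n f with hp
    set NN := p.natDegree with hNN
    set w : ℕ → ℝ := fun d => ((X ^ d %ₘ M).coeff m) with hw
    set W : MvPolynomial (Fin n) ℝ :=
      ∑ d ∈ Finset.range (NN + 1), (p.coeff d) * MvPolynomial.C (w d) with hW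
    have hWeval : ∀ x' : Fin n → ℝ,
        MvPolynomial.eval x' W = ((p.map (MvPolynomial.eval x')) %ₘ M).coeff m := by
      intro x'
      rw [hW, map_sum, modByMonic_coeff_sum_expand M hMmonic _ NN m
        (Nat.lt_succ_of_le (Polynomial.natDegree_map_le))]
      refine Finset.sum_congr rfl fun d _ => ?_
      rw [map_mul, MvPolynomial.eval_C, Polynomial.coeff_map]
    -- vanishing away from a'
    have hvanW : ∀ x' : Fin n → ℝ, (∀ i, ∃ j : ℕ, j ≤ m ∧ x' i = (j : ℝ)) → x' ≠ a' →
        MvPolynomial.eval x' W = 0 := by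
      intro x' hgrid hne
      rw [hWeval x']
      have hroot : ∀ s ∈ insert (a 0) T', (X - C s) ∣ p.map (MvPolynomial.eval x') := by
        intro s hsmem
        refine Polynomial.dvd_iff_isRoot.2 ?_
        have hsT : s ∈ Tfull := by
          rcases Finset.mem_insert.1 hsmem with h | h
          · rw [h]; exact ha0T
          · exact Finset.mem_of_mem_erase h
        have hgrid' : ∀ i, ∃ j : ℕ, j ≤ m ∧ (Fin.cons s x' : Fin (n + 1) → ℝ) i = (j : ℝ) := by
          intro i
          refine Fin.cases ?_ ?_ i
          · obtain ⟨j, hj, hsj⟩ := hTmem s hsT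
            exact ⟨j, hj, by simpa using hsj⟩
          · intro i'; simpa using hgrid i'
        have hnea : (Fin.cons s x' : Fin (n + 1) → ℝ) ≠ a := by
          obtain ⟨i, hi⟩ := Function.ne_iff.1 hne
          intro hcontra
          apply hi
          have := congrFun hcontra i.succ
          simpa [Fin.cons_succ, ha', Fin.tail] using this
        have h0 := hvan _ hgrid' hnea
        rw [MvPolynomial.eval_eq_eval_mv_eval'] at h0
        exact h0
      have hprod := prodpow_dvd (insert (a 0) T') 1 _
        (by intro s hs; rw [pow_one]; exact hroot s hs)
      have hMeq : M = ∏ s ∈ insert (a 0) T', (X - C s) ^ 1 := by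
        rw [Finset.prod_insert (Finset.notMem_erase _ _), hMdef, hQdef, pow_one, mul_comm]
      rw [(Polynomial.modByMonic_eq_zero_iff_dvd hMmonic).2 (hMeq ▸ hprod),
        Polynomial.coeff_zero]
    -- nonvanishing at a'
    have hQdvd : Q ∣ p.map (MvPolynomial.eval a') := by
      rw [hQdef]
      refine prodpow_dvd T' 1 _ ?_
      intro s hs
      rw [pow_one]
      refine Polynomial.dvd_iff_isRoot.2 ?_
      have hsne : s ≠ a 0 := (Finset.mem_erase.1 hs).1
      have hsT : s ∈ Tfull := Finset.mem_of_mem_erase hs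
      have hgrid' : ∀ i, ∃ j : ℕ, j ≤ m ∧ (Fin.cons s a' : Fin (n + 1) → ℝ) i = (j : ℝ) := by
        intro i
        refine Fin.cases ?_ ?_ i
        · obtain ⟨j, hj, hsj⟩ := hTmem s hsT
          exact ⟨j, hj, by simpa using hsj⟩
        · intro i'
          obtain ⟨j, hj, hsj⟩ := ha i'.succ
          exact ⟨j, hj, by simpa [ha', Fin.tail] using hsj⟩
      have hnea : (Fin.cons s a' : Fin (n + 1) → ℝ) ≠ a := by
        intro hcontra
        exact hsne (by simpa using congrFun hcontra 0)
      have h0 := hvan _ hgrid' hnea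
      rw [MvPolynomial.eval_eq_eval_mv_eval'] at h0
      exact h0
    obtain ⟨ψ, hψ⟩ := hQdvd
    have hevalWa : MvPolynomial.eval a' W = ψ.eval (a 0) := by
      rw [hWeval a', hψ, hMdef, ← hQdeg]
      exact coeff_mul_modByMonic Q hQmonic (a 0) ψ
    have hφa : (p.map (MvPolynomial.eval a')).eval (a 0) = MvPolynomial.eval a f := by
      rw [← MvPolynomial.eval_eq_eval_mv_eval', ha', Fin.cons_self_tail]
    have hψ0 : ψ.eval (a 0) ≠ 0 := by
      intro h0
      apply hnz
      rw [← hφa, hψ, Polynomial.eval_mul, h0, mul_zero]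
    have hWa : MvPolynomial.eval a' W ≠ 0 := by rw [hevalWa]; exact hψ0
    -- induction hypothesis
    have hga' : ∀ i, ∃ j : ℕ, j ≤ m ∧ a' i = (j : ℝ) := by
      intro i
      obtain ⟨j, hj, hsj⟩ := ha i.succ
      exact ⟨j, hj, by simpa [ha', Fin.tail] using hsj⟩
    have hIH := ih W a' hga' hvanW hWa
    -- degree bookkeeping
    have hwzero : ∀ d, d < m → w d = 0 := by
      intro d hd
      exact X_pow_modByMonic_coeff_eq_zero M hMmonic d m hd (by omega)
    have hterm0 : ∀ d, p.coeff d * MvPolynomial.C (w d) ≠ 0 →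
        m ≤ d ∧ (p.coeff d).totalDegree + d ≤ f.totalDegree := by
      intro d hne0
      have hc : p.coeff d ≠ 0 := left_ne_zero_of_mul hne0
      have hwne : w d ≠ 0 := by
        intro h
        exact hne0 (by rw [h, map_zero, mul_zero])
      constructor
      · by_contra hlt
        exact hwne (hwzero d (by omega))
      · exact MvPolynomial.totalDegree_coeff_finSuccEquiv_add_le f d hc
    have hWne0 : W ≠ 0 := by
      intro h
      exact hWa (by rw [h, map_zero])
    obtain ⟨d₀, hd₀mem, hd₀⟩ :
        ∃ d ∈ Finset.range (NN + 1), p.coeff d * MvPolynomial.C (w d) ≠ 0 := by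
      by_contra hall
      push_neg at hall
      exact hWne0 (by rw [hW]; exact Finset.sum_eq_zero hall)
    obtain ⟨hmd₀, hd₀deg⟩ := hterm0 d₀ hd₀
    have hmD : m ≤ f.totalDegree := by omega
    have hWdeg : W.totalDegree ≤ f.totalDegree - m := by
      rw [hW]
      refine (MvPolynomial.totalDegree_finset_sum _ _).trans (Finset.sup_le ?_)
      intro d _
      by_cases h : p.coeff d * MvPolynomial.C (w d) = 0
      · rw [h]; simp
      · obtain ⟨hmd, hdeg⟩ := hterm0 d h
        calc (p.coeff d * MvPolynomial.C (w d)).totalDegree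
            ≤ (p.coeff d).totalDegree + (MvPolynomial.C (w d)).totalDegree :=
              MvPolynomial.totalDegree_mul _ _
          _ ≤ (p.coeff d).totalDegree := by simp [MvPolynomial.totalDegree_C]
          _ ≤ f.totalDegree - m := by omega
    calc m * (n + 1) = m * n + m := by ring
      _ ≤ (f.totalDegree - m) + m := by
          have := le_trans hIH hWdeg
          omega
      _ = f.totalDegree := Nat.sub_add_cancel hmD

/-- Coefficients of products of "affine in X" polynomials have controlled total degree. -/
theorem coeff_prod_linear {n' : ℕ} {ι : Type*} [DecidableEq ι] (α : ι → ℝ)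
    (Uf : ι → MvPolynomial (Fin n') ℝ) (hU : ∀ j, (Uf j).totalDegree ≤ 1) (s : Finset ι) :
    ∀ d, ((∏ j ∈ s, (Polynomial.C (MvPolynomial.C (α j)) * X + Polynomial.C (Uf j))).coeff d)
        = 0 ∨
      ((∏ j ∈ s, (Polynomial.C (MvPolynomial.C (α j)) * X + Polynomial.C (Uf j))).coeff d
        ).totalDegree + d ≤ s.card := by
  induction s using Finset.induction_on with
  | empty =>
    intro d
    rcases Nat.eq_zero_or_pos d with rfl | hd
    · right; simp
    · left
      rw [Finset.prod_empty, Polynomial.coeff_one, if_neg (by omega)]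
  | insert _ _ hnotmem ih =>
    rename_i j s
    intro d
    rw [Finset.prod_insert hnotmem, add_mul, Polynomial.coeff_add, mul_assoc]
    rw [Polynomial.coeff_C_mul, Polynomial.coeff_C_mul]
    set Pr := ∏ j ∈ s, (Polynomial.C (MvPolynomial.C (α j)) * X + Polynomial.C (Uf j)) with hPr
    have hcard : (insert j s).card = s.card + 1 := Finset.card_insert_of_notMem hnotmem
    rcases d with _ | d
    · -- d = 0
      have hX0 : (X * Pr).coeff 0 = 0 := by
        rw [Polynomial.mul_coeff_zero, Polynomial.coeff_X_zero, zero_mul]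
      rw [hX0, mul_zero, zero_add]
      rcases ih 0 with h | h
      · left; rw [h, mul_zero]
      · right
        rw [hcard]
        calc (Uf j * Pr.coeff 0).totalDegree + 0
            ≤ ((Uf j).totalDegree + (Pr.coeff 0).totalDegree) + 0 :=
              add_le_add_left (MvPolynomial.totalDegree_mul _ _) _
          _ ≤ s.card + 1 := by have := hU j; omega
    · -- d + 1
      rw [Polynomial.coeff_X_mul]
      rcases ih d with h1 | h1 <;> rcases ih (d + 1) with h2 | h2
      · left; rw [h1, h2, mul_zero, mul_zero, add_zero]
      · right
        rw [h1, mul_zero, zero_add, hcard]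
        calc (Uf j * Pr.coeff (d + 1)).totalDegree + (d + 1)
            ≤ ((Uf j).totalDegree + (Pr.coeff (d + 1)).totalDegree) + (d + 1) :=
              add_le_add_left (MvPolynomial.totalDegree_mul _ _) _
          _ ≤ s.card + 1 := by have := hU j; omega
      · right
        rw [h2, mul_zero, add_zero, hcard]
        calc (MvPolynomial.C (α j) * Pr.coeff d).totalDegree + (d + 1)
            ≤ ((MvPolynomial.C (α j) : MvPolynomial (Fin n') ℝ).totalDegree
                + (Pr.coeff d).totalDegree) + (d + 1) :=
              add_le_add_left (MvPolynomial.totalDegree_mul _ _) _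
          _ ≤ s.card + 1 := by
              rw [MvPolynomial.totalDegree_C]
              omega
      · right
        rw [hcard]
        have hb1 : (MvPolynomial.C (α j) * Pr.coeff d).totalDegree + (d + 1) ≤ s.card + 1 := by
          calc (MvPolynomial.C (α j) * Pr.coeff d).totalDegree + (d + 1)
              ≤ ((MvPolynomial.C (α j) : MvPolynomial (Fin n') ℝ).totalDegree
                  + (Pr.coeff d).totalDegree) + (d + 1) :=
                add_le_add_left (MvPolynomial.totalDegree_mul _ _) _
            _ ≤ s.card + 1 := by
                rw [MvPolynomial.totalDegree_C]
                omega
        have hb2 : (Uf j * Pr.coeff (d + 1)).totalDegree + (d + 1) ≤ s.card + 1 := by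
          calc (Uf j * Pr.coeff (d + 1)).totalDegree + (d + 1)
              ≤ ((Uf j).totalDegree + (Pr.coeff (d + 1)).totalDegree) + (d + 1) :=
                add_le_add_left (MvPolynomial.totalDegree_mul _ _) _
            _ ≤ s.card + 1 := by have := hU j; omega
        have := MvPolynomial.totalDegree_add (MvPolynomial.C (α j) * Pr.coeff d)
          (Uf j * Pr.coeff (d + 1))
        have hmax := max_le_iff.1 (le_refl
          (max (MvPolynomial.C (α j) * Pr.coeff d).totalDegree
            (Uf j * Pr.coeff (d + 1)).totalDegree))
        omega

end Stmt12Aux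

/-- if `N` affine hyperplanes in `ℝ^n`, none through a grid point `a`,
cover every point of `{0,…,m}^n \ {a}` at least `k` times (with multiplicity),
then `N ≥ mn + (k-1)m`. -/
theorem stmt12 (m n k N : ℕ) (hm : 1 ≤ m) (hn : 1 ≤ n) (hk : 2 ≤ k)
    (a : Fin n → ℝ) (ha : ∀ i, ∃ j : ℕ, j ≤ m ∧ a i = (j : ℝ))
    (c : Fin N → Fin n → ℝ) (c₀ : Fin N → ℝ)
    (hne : ∀ j, c j ≠ 0)
    (havoid : ∀ j, ∑ i, c j i * a i ≠ c₀ j)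
    (hcover : ∀ x : Fin n → ℝ, (∀ i, ∃ j : ℕ, j ≤ m ∧ x i = (j : ℝ)) → x ≠ a →
      k ≤ Set.ncard {j | ∑ i, c j i * x i = c₀ j}) :
    m * n + (k - 1) * m ≤ N := by
  classical
  open Stmt12Aux in
  obtain ⟨n', rfl⟩ : ∃ n', n = n' + 1 := ⟨n - 1, by omega⟩
  set a' : Fin n' → ℝ := Fin.tail a with ha'
  obtain ⟨j0, hj0le, hj0⟩ := ha 0
  set Tfull : Finset ℝ := (Finset.range (m + 1)).image (Nat.cast : ℕ → ℝ) with hTfull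
  have hTmem : ∀ s ∈ Tfull, ∃ j : ℕ, j ≤ m ∧ s = (j : ℝ) := by
    intro s hs
    simp only [hTfull, Finset.mem_image, Finset.mem_range] at hs
    obtain ⟨j, hj, rfl⟩ := hs
    exact ⟨j, by omega, rfl⟩
  have ha0T : a 0 ∈ Tfull := by
    simp only [hTfull, Finset.mem_image, Finset.mem_range]
    exact ⟨j0, by omega, hj0.symm⟩
  set T' : Finset ℝ := Tfull.erase (a 0) with hT'
  have hT'card : T'.card = m := by
    rw [hT', Finset.card_erase_of_mem ha0T, hTfull,
      Finset.card_image_of_injective _ Nat.cast_injective, Finset.card_range]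
    omega
  set Q : ℝ[X] := ∏ s ∈ T', (X - C s) ^ k with hQdef
  have hQmonic : Q.Monic := Stmt12Aux.monic_prodpow T' k
  have hQdeg : Q.natDegree = k * m := by
    rw [hQdef, Stmt12Aux.natDegree_prodpow, hT'card]
  set M : ℝ[X] := Q * (X - C (a 0)) with hMdef
  have hMmonic : M.Monic := hQmonic.mul (monic_X_sub_C _)
  have hMdeg : M.natDegree = k * m + 1 := by
    rw [hMdef, hQmonic.natDegree_mul (monic_X_sub_C _), hQdeg, Polynomial.natDegree_X_sub_C]
  -- the polynomial data
  set U : Fin N → MvPolynomial (Fin n') ℝ := fun j =>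
    (∑ i, MvPolynomial.C (c j i.succ) * MvPolynomial.X i) - MvPolynomial.C (c₀ j) with hU
  set L : Fin N → Polynomial (MvPolynomial (Fin n') ℝ) := fun j =>
    Polynomial.C (MvPolynomial.C (c j 0)) * X + Polynomial.C (U j) with hL
  set P : Polynomial (MvPolynomial (Fin n') ℝ) := ∏ j, L j with hP
  set NN := P.natDegree with hNN
  set w : ℕ → ℝ := fun d => ((X ^ d %ₘ M).coeff (k * m)) with hw
  set W : MvPolynomial (Fin n') ℝ :=
    ∑ d ∈ Finset.range (NN + 1), (P.coeff d) * MvPolynomial.C (w d) with hW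
  have hUeval : ∀ (x' : Fin n' → ℝ) (j), MvPolynomial.eval x' (U j)
      = (∑ i, c j i.succ * x' i) - c₀ j := by
    intro x' j
    simp [hU]
  have hLmap : ∀ (x' : Fin n' → ℝ) (j), (L j).map (MvPolynomial.eval x')
      = Polynomial.C (c j 0) * X + Polynomial.C (MvPolynomial.eval x' (U j)) := by
    intro x' j
    simp [hL]
  have hPmap : ∀ x' : Fin n' → ℝ, P.map (MvPolynomial.eval x')
      = ∏ j, ((L j).map (MvPolynomial.eval x')) := by
    intro x'
    rw [hP, Polynomial.map_prod]
  -- divisibility from the covering hypothesis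
  have hfactor : ∀ (x' : Fin n' → ℝ) (s : ℝ), (∀ i, ∃ j : ℕ, j ≤ m ∧ x' i = (j : ℝ)) →
      (∃ j : ℕ, j ≤ m ∧ s = (j : ℝ)) → (Fin.cons s x' : Fin (n' + 1) → ℝ) ≠ a →
      (X - C s) ^ k ∣ P.map (MvPolynomial.eval x') := by
    intro x' s hgx hgs hnea
    have hgrid : ∀ i, ∃ j : ℕ, j ≤ m ∧ (Fin.cons s x' : Fin (n' + 1) → ℝ) i = (j : ℝ) := by
      intro i
      refine Fin.cases ?_ ?_ i
      · obtain ⟨j, hj, hsj⟩ := hgs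
        exact ⟨j, hj, by simpa using hsj⟩
      · intro i'; simpa using hgx i'
    have hcov := hcover _ hgrid hnea
    set Jset : Set (Fin N) := {j | ∑ i, c j i * (Fin.cons s x' : Fin (n' + 1) → ℝ) i = c₀ j}
      with hJset
    have hcard : k ≤ Jset.toFinset.card := by
      rw [← Set.ncard_eq_toFinset_card']
      exact hcov
    have hdvd1 : ∀ j ∈ Jset.toFinset, (X - C s) ∣ (L j).map (MvPolynomial.eval x') := by
      intro j hj
      rw [Set.mem_toFinset] at hj
      have hj' : ∑ i, c j i * (Fin.cons s x' : Fin (n' + 1) → ℝ) i = c₀ j := hj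
      have hsum : ∑ i, c j i * (Fin.cons s x' : Fin (n' + 1) → ℝ) i
          = c j 0 * s + ∑ i, c j i.succ * x' i := by
        rw [Fin.sum_univ_succ]
        simp
      have hval : MvPolynomial.eval x' (U j) = -(c j 0 * s) := by
        rw [hUeval]
        rw [hsum] at hj'
        linarith
      rw [hLmap, hval]
      refine ⟨Polynomial.C (c j 0), ?_⟩
      rw [map_neg, sub_mul, ← Polynomial.C_mul, mul_comm s (c j 0)]
      ring
    have h2 : (X - C s) ^ (Jset.toFinset.card)
        ∣ ∏ j ∈ Jset.toFinset, (L j).map (MvPolynomial.eval x') := by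
      rw [← Finset.prod_const]
      exact Finset.prod_dvd_prod_of_dvd _ _ hdvd1
    have h3 : (∏ j ∈ Jset.toFinset, (L j).map (MvPolynomial.eval x'))
        ∣ P.map (MvPolynomial.eval x') := by
      rw [hPmap]
      exact Finset.prod_dvd_prod_of_subset _ _ _ (Finset.subset_univ _)
    exact dvd_trans (pow_dvd_pow _ hcard) (h2.trans h3)
  have hWeval : ∀ x' : Fin n' → ℝ,
      MvPolynomial.eval x' W = ((P.map (MvPolynomial.eval x')) %ₘ M).coeff (k * m) := by
    intro x'
    rw [hW, map_sum, Stmt12Aux.modByMonic_coeff_sum_expand M hMmonic _ NN (k * m)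
      (Nat.lt_succ_of_le (Polynomial.natDegree_map_le))]
    refine Finset.sum_congr rfl fun d _ => ?_
    rw [map_mul, MvPolynomial.eval_C, Polynomial.coeff_map]
  -- vanishing of W away from a'
  have hvanW : ∀ x' : Fin n' → ℝ, (∀ i, ∃ j : ℕ, j ≤ m ∧ x' i = (j : ℝ)) → x' ≠ a' →
      MvPolynomial.eval x' W = 0 := by
    intro x' hgrid hnex
    rw [hWeval x']
    have hdvd : ∀ s ∈ insert (a 0) T', (X - C s) ^ k ∣ P.map (MvPolynomial.eval x') := by
      intro s hsmem
      have hsT : s ∈ Tfull := by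
        rcases Finset.mem_insert.1 hsmem with h | h
        · rw [h]; exact ha0T
        · exact Finset.mem_of_mem_erase h
      refine hfactor x' s hgrid (hTmem s hsT) ?_
      obtain ⟨i, hi⟩ := Function.ne_iff.1 hnex
      intro hcontra
      apply hi
      have := congrFun hcontra i.succ
      simpa [Fin.cons_succ, ha', Fin.tail] using this
    have hprod := Stmt12Aux.prodpow_dvd (insert (a 0) T') k _ hdvd
    have hMdvd : M ∣ ∏ s ∈ insert (a 0) T', (X - C s) ^ k := by
      rw [Finset.prod_insert (Finset.notMem_erase _ _), hMdef, hQdef]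
      calc (∏ s ∈ T', (X - C s) ^ k) * (X - C (a 0))
          = (X - C (a 0)) * ∏ s ∈ T', (X - C s) ^ k := mul_comm _ _
        _ ∣ (X - C (a 0)) ^ k * ∏ s ∈ T', (X - C s) ^ k :=
            mul_dvd_mul (dvd_pow_self _ (by omega)) dvd_rfl
    rw [(Polynomial.modByMonic_eq_zero_iff_dvd hMmonic).2 (hMdvd.trans hprod),
      Polynomial.coeff_zero]
  -- nonvanishing at a'
  have hQdvd : Q ∣ P.map (MvPolynomial.eval a') := by
    rw [hQdef]
    refine Stmt12Aux.prodpow_dvd T' k _ ?_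
    intro s hs
    have hsne : s ≠ a 0 := (Finset.mem_erase.1 hs).1
    have hsT : s ∈ Tfull := Finset.mem_of_mem_erase hs
    refine hfactor a' s ?_ (hTmem s hsT) ?_
    · intro i
      obtain ⟨j, hj, hsj⟩ := ha i.succ
      exact ⟨j, hj, by simpa [ha', Fin.tail] using hsj⟩
    · intro hcontra
      exact hsne (by simpa using congrFun hcontra 0)
  obtain ⟨ψ, hψ⟩ := hQdvd
  have hevalWa : MvPolynomial.eval a' W = ψ.eval (a 0) := by
    rw [hWeval a', hψ, hMdef, ← hQdeg]
    exact Stmt12Aux.coeff_mul_modByMonic Q hQmonic (a 0) ψ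
  have hφa : (P.map (MvPolynomial.eval a')).eval (a 0)
      = ∏ j, ((∑ i, c j i * a i) - c₀ j) := by
    rw [hPmap, Polynomial.eval_prod]
    refine Finset.prod_congr rfl fun j _ => ?_
    rw [hLmap, hUeval]
    have hsum : ∑ i, c j i * a i = c j 0 * a 0 + ∑ i, c j i.succ * a' i := by
      rw [Fin.sum_univ_succ]
      simp [ha', Fin.tail]
    rw [Polynomial.eval_add, Polynomial.eval_mul, Polynomial.eval_C, Polynomial.eval_X,
      Polynomial.eval_C, hsum]
    ring
  have hψ0 : ψ.eval (a 0) ≠ 0 := by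
    intro h0
    have hprodne : (∏ j, ((∑ i, c j i * a i) - c₀ j)) ≠ 0 := by
      rw [Finset.prod_ne_zero_iff]
      intro j _
      exact sub_ne_zero_of_ne (havoid j)
    apply hprodne
    rw [← hφa, hψ, Polynomial.eval_mul, h0, mul_zero]
  have hWa : MvPolynomial.eval a' W ≠ 0 := by rw [hevalWa]; exact hψ0
  -- apply the punctured CN
  have hga' : ∀ i, ∃ j : ℕ, j ≤ m ∧ a' i = (j : ℝ) := by
    intro i
    obtain ⟨j, hj, hsj⟩ := ha i.succ
    exact ⟨j, hj, by simpa [ha', Fin.tail] using hsj⟩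
  have hPCN := Stmt12Aux.PCN m n' W a' hga' hvanW hWa
  -- degree bookkeeping
  have hUdeg : ∀ j, (U j).totalDegree ≤ 1 := by
    intro j
    rw [hU]
    refine le_trans (MvPolynomial.totalDegree_sub _ _) (max_le ?_ ?_)
    · refine (MvPolynomial.totalDegree_finset_sum _ _).trans (Finset.sup_le ?_)
      intro i _
      calc (MvPolynomial.C (c j i.succ) * MvPolynomial.X i :
            MvPolynomial (Fin n') ℝ).totalDegree
          ≤ (MvPolynomial.C (c j i.succ) : MvPolynomial (Fin n') ℝ).totalDegree
            + (MvPolynomial.X i : MvPolynomial (Fin n') ℝ).totalDegree :=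
            MvPolynomial.totalDegree_mul _ _
        _ ≤ 1 := by
            rw [MvPolynomial.totalDegree_C, MvPolynomial.totalDegree_X]
    · rw [MvPolynomial.totalDegree_C]
      omega
  have hcoeffP := Stmt12Aux.coeff_prod_linear (fun j => c j 0) U hUdeg Finset.univ
  have hPcard : (Finset.univ : Finset (Fin N)).card = N := by simp
  have hterm0 : ∀ d, P.coeff d * MvPolynomial.C (w d) ≠ 0 →
      k * m ≤ d ∧ (P.coeff d).totalDegree + d ≤ N := by
    intro d hne0
    have hc : P.coeff d ≠ 0 := left_ne_zero_of_mul hne0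
    have hwne : w d ≠ 0 := by
      intro h
      exact hne0 (by rw [h, map_zero, mul_zero])
    constructor
    · by_contra hlt
      exact hwne (Stmt12Aux.X_pow_modByMonic_coeff_eq_zero M hMmonic d (k * m)
        (by omega) (by omega))
    · rcases hcoeffP d with h | h
      · exact absurd (by rw [← hP] at h; exact h) hc
      · rw [← hP, hPcard] at h
        exact h
  have hWne0 : W ≠ 0 := by
    intro h
    exact hWa (by rw [h, map_zero])
  obtain ⟨d₀, hd₀mem, hd₀⟩ :
      ∃ d ∈ Finset.range (NN + 1), P.coeff d * MvPolynomial.C (w d) ≠ 0 := by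
    by_contra hall
    push_neg at hall
    exact hWne0 (by rw [hW]; exact Finset.sum_eq_zero hall)
  obtain ⟨hmd₀, hd₀deg⟩ := hterm0 d₀ hd₀
  have hkmN : k * m ≤ N := by omega
  have hWdeg : W.totalDegree ≤ N - k * m := by
    rw [hW]
    refine (MvPolynomial.totalDegree_finset_sum _ _).trans (Finset.sup_le ?_)
    intro d _
    by_cases h : P.coeff d * MvPolynomial.C (w d) = 0
    · rw [h]; simp
    · obtain ⟨hmd, hdeg⟩ := hterm0 d h
      calc (P.coeff d * MvPolynomial.C (w d)).totalDegree
          ≤ (P.coeff d).totalDegree + (MvPolynomial.C (w d)).totalDegree :=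
            MvPolynomial.totalDegree_mul _ _
        _ ≤ (P.coeff d).totalDegree := by simp [MvPolynomial.totalDegree_C]
        _ ≤ N - k * m := by omega
  have hfin : m * n' + k * m ≤ N := by
    have h1 : m * n' ≤ N - k * m := le_trans hPCN hWdeg
    omega
  calc m * (n' + 1) + (k - 1) * m = m * n' + m + (k - 1) * m := by ring
    _ = m * n' + (1 + (k - 1)) * m := by ring
    _ = m * n' + k * m := by rw [show 1 + (k - 1) = k by omega]
    _ ≤ N := hfin
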